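/- Let $T : X \to X$ be a Banach $G$-contraction on a uniform space $X$ with graph $G$, and let $x_0 \in X$ satisfy $T x_0 \in [x_0]_{\widetilde{G}}$. Then the component $[x_0]_{\widetilde{G}}$ is $T$-invariant, and $T$ restricted to $[x_0]_{\widetilde{G}}$ is a Banach $\widetilde{G}_{x_0}$-contraction, where $\widetilde{G}_{x_0}$ is the component subgraph of $\widetilde{G}$ containing $x_0$. -/

import Mathlib

open Filter Topology Set

/-- A pseudometric on `X`. -/
def IsPseudoMetric {X : Type*} (d : X → X → ℝ) : Prop :=
  (∀ x, d x x = 0) ∧ (∀ x y, d x y = d y x) ∧ (∀ x y z, d x z ≤ d x y + d y z)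

/-- The set `V(ρ, r) = {(x,y) : ρ(x,y) < r}`. -/
def VEnt {X : Type*} (d : X → X → ℝ) (r : ℝ) : Set (X × X) := {p | d p.1 p.2 < r}

/-- The scaled basic entourage `α V = ⋂ i, V(ρ i, α * r i)`. -/
def scaledEnt {X : Type*} {m : ℕ} (ρ : Fin m → X → X → ℝ) (r : Fin m → ℝ) (α : ℝ) :
    Set (X × X) := ⋂ i, VEnt (ρ i) (α * r i)

/-- The uniformity of `X` is generated by the family `F` of pseudometrics:
each `V(F i, r)` is an entourage, and the basic entourages form a base. -/
def GeneratesUniformity {X ι : Type*} [UniformSpace X] (F : ι → X → X → ℝ) : Prop :=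
  (∀ i, IsPseudoMetric (F i)) ∧
  (∀ i (r : ℝ), 0 < r → VEnt (F i) r ∈ uniformity X) ∧
  (∀ U ∈ uniformity X, ∃ (m : ℕ) (f : Fin m → ι) (r : Fin m → ℝ),
    (∀ i, 0 < r i) ∧ scaledEnt (fun i => F (f i)) r 1 ⊆ U)

/-- `T` is a Banach `G`-contraction (with edge set `E`) with contractive constant `α`,
with respect to the family `F` of pseudometrics. -/
def BanachGContraction {X ι : Type*} (F : ι → X → X → ℝ) (E : Set (X × X))
    (T : X → X) (α : ℝ) : Prop :=
  (∀ x y : X, (x, y) ∈ E → (T x, T y) ∈ E) ∧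
  (∀ (m : ℕ) (f : Fin m → ι) (r : Fin m → ℝ), (∀ i, 0 < r i) →
    ∀ x y : X, (x, y) ∈ scaledEnt (fun i => F (f i)) r 1 ∩ E →
      (T x, T y) ∈ scaledEnt (fun i => F (f i)) r α)

/-- The relation of the symmetrized graph `G̃`. -/
def symRel {X : Type*} (E : Set (X × X)) (a b : X) : Prop := (a, b) ∈ E ∨ (b, a) ∈ E

/-- The edge set of the symmetrized graph `G̃`. -/
def symEdges {X : Type*} (E : Set (X × X)) : Set (X × X) :=
  E ∪ {p | (p.2, p.1) ∈ E}

/-- The component `[x]_{G̃}` of `x`: all points joined to `x` by a path in `G̃`. -/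
def component {X : Type*} (E : Set (X × X)) (x : X) : Set X :=
  {y | Relation.ReflTransGen (symRel E) x y}

theorem stmt11 {X ι : Type*} (F : ι → X → X → ℝ) (hF : ∀ i, IsPseudoMetric (F i))
    (E : Set (X × X)) (hloop : ∀ x : X, (x, x) ∈ E)
    (T : X → X) (α : ℝ) (hα0 : 0 < α) (hα1 : α < 1)
    (hT : BanachGContraction F E T α)
    (x0 : X) (hx0 : T x0 ∈ component E x0) :
    (∀ y ∈ component E x0, T y ∈ component E x0) ∧
    BanachGContraction F (symEdges E ∩ (component E x0 ×ˢ component E x0)) T α := by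
  classical
  have hsym : ∀ a b : X, symRel E a b → symRel E (T a) (T b) := by
    intro a b h
    rcases h with h | h
    · exact Or.inl (hT.1 _ _ h)
    · exact Or.inr (hT.1 _ _ h)
  have hinv : ∀ y ∈ component E x0, T y ∈ component E x0 := by
    intro y hy
    have h1 : Relation.ReflTransGen (symRel E) (T x0) (T y) :=
      Relation.ReflTransGen.lift T hsym _ _ hy
    exact hx0.trans h1
  refine ⟨hinv, ?_, ?_⟩
  · rintro x y ⟨hE, hx, hy⟩
    refine ⟨?_, hinv x hx, hinv y hy⟩
    rcases hE with h | h
    · exact Or.inl (hT.1 _ _ h)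
    · exact Or.inr (hT.1 _ _ h)
  · intro m f r hr x y ⟨hV, hE, _, _⟩
    have hVsym : ∀ (β : ℝ) (a b : X), (a, b) ∈ scaledEnt (fun i => F (f i)) r β →
        (b, a) ∈ scaledEnt (fun i => F (f i)) r β := by
      intro β a b h
      simp only [scaledEnt, VEnt, Set.mem_iInter, Set.mem_setOf_eq] at h ⊢
      intro i
      rw [(hF (f i)).2.1 b a]
      exact h i
    rcases hE with h | h
    · exact hT.2 m f r hr x y ⟨hV, h⟩
    · exact hVsym α _ _ (hT.2 m f r hr y x ⟨hVsym 1 _ _ hV, h⟩)
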